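/- Let V be a finite-dimensional F[H]-module such that the E[H]-module E ⊗_F V obtained by extension of scalars is multiplicity free. Then V is multiplicity free as an F[H]-module. -/

import Mathlib

/-- A module over a ring is multiplicity free if it is semisimple and no two distinct
simple submodules are isomorphic. -/
def MultiplicityFree (R M : Type*) [Ring R] [AddCommGroup M] [Module R M] : Prop :=
  IsSemisimpleModule R M ∧
    ∀ S T : Submodule R M, IsSimpleModule R S → IsSimpleModule R T →
      Nonempty (S ≃ₗ[R] T) → S = T

/-- The representation of `H` on `E ⊗[F] V` obtained from a representation of `H` on `V` by
extension of scalars from `F` to `E`. -/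
noncomputable def repBaseChange (F E : Type*) [Field F] [Field E] [Algebra F E]
    {H V : Type*} [Monoid H] [AddCommGroup V] [Module F V]
    (ρ : Representation F H V) : Representation E H (TensorProduct F E V) where
  toFun g := LinearMap.baseChange E (ρ g)
  map_one' := by simp only [map_one, LinearMap.baseChange_one]
  map_mul' g h := by simp only [map_mul, LinearMap.baseChange_mul]

noncomputable instance asModuleAddCommGroup {k G V : Type*} [CommSemiring k] [Monoid G]
    [AddCommGroup V] [Module k V] (ρ : Representation k G V) :
    AddCommGroup ρ.asModule :=
  inferInstanceAs (AddCommGroup V)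

open TensorProduct Representation

noncomputable def rr {F E : Type*} [Field F] [Field E] [Algebra F E]
    {V : Type*} [AddCommGroup V] [Module F V] (l : E →ₗ[F] F) :
    TensorProduct F E V →ₗ[F] V :=
  TensorProduct.lift ((LinearMap.lsmul F V).comp l)

@[simp] lemma rr_tmul {F E : Type*} [Field F] [Field E] [Algebra F E]
    {V : Type*} [AddCommGroup V] [Module F V] (l : E →ₗ[F] F) (e : E) (v : V) :
    rr l (e ⊗ₜ[F] v) = l e • v := rfl

lemma rr_baseChange {F E : Type*} [Field F] [Field E] [Algebra F E]
    {V : Type*} [AddCommGroup V] [Module F V] (l : E →ₗ[F] F) (g : V →ₗ[F] V)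
    (x : TensorProduct F E V) :
    rr l (LinearMap.baseChange E g x) = g (rr l x) := by
  have h : (rr l (V := V)).comp ((LinearMap.baseChange E g).restrictScalars F)
      = g.comp (rr l) := by
    apply TensorProduct.ext'
    intro e v
    simp
  exact DFunLike.congr_fun h x

lemma rr_smulE {F E : Type*} [Field F] [Field E] [Algebra F E]
    {V : Type*} [AddCommGroup V] [Module F V] (l : E →ₗ[F] F) (c : E)
    (x : TensorProduct F E V) :
    rr l (c • x) = rr (l.comp (LinearMap.mulLeft F c)) x := by
  induction x using TensorProduct.induction_on with
  | zero => simp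
  | tmul e v => rw [smul_tmul']; simp
  | add x y hx hy => simp [smul_add, hx, hy]

namespace Statement16Aux

variable {F E : Type*} [Field F] [Field E] [Algebra F E]
  {H : Type*} [Group H] {V : Type*} [AddCommGroup V] [Module F V]
  (ρ : Representation F H V)

lemma repBaseChange_apply (g : H) :
    repBaseChange F E ρ g = LinearMap.baseChange E (ρ g) := rfl

/-- The `E[H]`-submodule of `E ⊗ V` spanned by `1 ⊗ U`. -/
noncomputable def extend (U : Submodule (MonoidAlgebra F H) ρ.asModule) :
    Submodule (MonoidAlgebra E H) (repBaseChange F E ρ).asModule :=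
  Submodule.span _ {x | ∃ u ∈ U, (repBaseChange F E ρ).asModuleEquiv x
      = (1 : E) ⊗ₜ[F] (ρ.asModuleEquiv u)}

lemma mem_extend {U : Submodule (MonoidAlgebra F H) ρ.asModule} {u : ρ.asModule}
    (hu : u ∈ U) :
    (repBaseChange F E ρ).asModuleEquiv.symm ((1 : E) ⊗ₜ[F] ρ.asModuleEquiv u)
      ∈ extend ρ U :=
  Submodule.subset_span ⟨u, hu, by simp⟩

lemma rr_mem_of_mem_extend {U : Submodule (MonoidAlgebra F H) ρ.asModule}
    {x : (repBaseChange F E ρ).asModule} (hx : x ∈ extend ρ U) :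
    ∀ l : E →ₗ[F] F,
      ρ.asModuleEquiv.symm (rr l ((repBaseChange F E ρ).asModuleEquiv x)) ∈ U := by
  induction hx using Submodule.span_induction with
  | mem x hgen =>
    intro l
    obtain ⟨u, hu, hxu⟩ := hgen
    rw [hxu, rr_tmul, asModuleEquiv_symm_map_smul]
    simp only [LinearEquiv.symm_apply_apply]
    exact U.smul_mem _ hu
  | zero => intro l; simpa using U.zero_mem
  | add x y hx hy ihx ihy =>
    intro l
    simp only [map_add]
    exact U.add_mem (ihx l) (ihy l)
  | smul b x hx ih =>
    induction b using MonoidAlgebra.induction_on with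
    | of g =>
      intro l
      rw [asModuleEquiv_map_smul, Representation.asAlgebraHom_of, repBaseChange_apply,
        rr_baseChange, asModuleEquiv_symm_map_rho]
      exact U.smul_mem _ (ih l)
    | add b₁ b₂ hb₁ hb₂ =>
      intro l
      rw [add_smul, map_add, map_add, map_add]
      exact U.add_mem (hb₁ l) (hb₂ l)
    | smul c b hb =>
      intro l
      rw [asModuleEquiv_map_smul, map_smul, LinearMap.smul_apply, rr_smulE]
      exact hb (l.comp (LinearMap.mulLeft F c))

end Statement16Aux

namespace Statement16Aux

variable {F E : Type*} [Field F] [Field E] [Algebra F E]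
  {H : Type*} [Group H] {V : Type*} [AddCommGroup V] [Module F V]
  (ρ : Representation F H V)

lemma exists_lam : ∃ l : E →ₗ[F] F, l 1 = 1 := by
  obtain ⟨K, hK⟩ := Submodule.exists_isCompl (Submodule.span F {(1 : E)})
  refine ⟨((LinearEquiv.toSpanNonzeroSingleton F E 1 one_ne_zero).symm.toLinearMap).comp
    (Submodule.projectionOnto _ K hK), ?_⟩
  have h1 : (1 : E) ∈ Submodule.span F {(1 : E)} := Submodule.mem_span_singleton_self 1
  have h := Submodule.projectionOnto_apply_left hK ⟨1, h1⟩
  simp only [LinearMap.comp_apply, h, LinearEquiv.coe_coe]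
  rw [LinearEquiv.symm_apply_eq]
  exact Subtype.ext (by simp)

lemma comm_asAlgebraHom' {k G W : Type*} [CommSemiring k] [Monoid G] [AddCommMonoid W]
    [Module k W] (τ : Representation k G W) (f : W →ₗ[k] W)
    (hf : ∀ g w, f (τ g w) = τ g (f w)) (a : MonoidAlgebra k G) (w : W) :
    f (τ.asAlgebraHom a w) = τ.asAlgebraHom a (f w) := by
  induction a using MonoidAlgebra.induction_on with
  | of g => rw [asAlgebraHom_of]; exact hf g w
  | add a b ha hb => simp only [map_add, LinearMap.add_apply, ha, hb]
  | smul c a ha => simp only [map_smul, LinearMap.smul_apply, ha]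

noncomputable def equivariantToModuleHom {k G W : Type*} [CommSemiring k] [Monoid G]
    [AddCommMonoid W] [Module k W] (τ : Representation k G W) (f : W →ₗ[k] W)
    (hf : ∀ g w, f (τ g w) = τ g (f w)) :
    τ.asModule →ₗ[MonoidAlgebra k G] τ.asModule where
  toFun x := τ.asModuleEquiv.symm (f (τ.asModuleEquiv x))
  map_add' x y := by simp
  map_smul' a x := by
    apply τ.asModuleEquiv.injective
    simp only [RingHom.id_apply, asModuleEquiv_map_smul, AddEquiv.apply_symm_apply]
    exact comm_asAlgebraHom' τ f hf a _

@[simp] lemma equivariantToModuleHom_apply {k G W : Type*} [CommSemiring k] [Monoid G]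
    [AddCommMonoid W] [Module k W] (τ : Representation k G W) (f : W →ₗ[k] W) (hf)
    (x : τ.asModule) :
    equivariantToModuleHom τ f hf x = τ.asModuleEquiv.symm (f (τ.asModuleEquiv x)) := rfl

lemma semisimple_of
    (hss : IsSemisimpleModule (MonoidAlgebra E H) (repBaseChange F E ρ).asModule) :
    IsSemisimpleModule (MonoidAlgebra F H) ρ.asModule := by
  obtain ⟨lam, hlam⟩ := exists_lam (F := F) (E := E)
  rw [isSemisimpleModule_iff]
  constructor
  intro U
  obtain ⟨W, hW⟩ := hss.exists_isCompl (extend ρ U)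
  set π : (repBaseChange F E ρ).asModule →ₗ[MonoidAlgebra E H]
      (repBaseChange F E ρ).asModule :=
    (extend ρ U).subtype ∘ₗ (Submodule.projectionOnto (R := MonoidAlgebra E H) (E := (repBaseChange F E ρ).asModule) _ W hW) with hπ
  have hπmem : ∀ x, π x ∈ extend ρ U := fun x => Submodule.coe_mem _
  have hπfix : ∀ x ∈ extend ρ U, π x = x := by
    intro x hx
    have := Submodule.projectionOnto_apply_left hW ⟨x, hx⟩
    simp only [hπ, LinearMap.comp_apply, this, Submodule.coe_subtype]
  -- the F-linear averaged projection
  have hsmulN : ∀ (e : E) (x : TensorProduct F E V),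
      (repBaseChange F E ρ).asModuleEquiv
        (π ((repBaseChange F E ρ).asModuleEquiv.symm (e • x)))
      = e • (repBaseChange F E ρ).asModuleEquiv
        (π ((repBaseChange F E ρ).asModuleEquiv.symm x)) := by
    intro e x
    rw [asModuleEquiv_symm_map_smul, map_smul, asModuleEquiv_map_smul, AlgHom.commutes,
      Module.algebraMap_end_apply]
  have hρN : ∀ (g : H) (x : TensorProduct F E V),
      (repBaseChange F E ρ).asModuleEquiv
        (π ((repBaseChange F E ρ).asModuleEquiv.symm (LinearMap.baseChange E (ρ g) x)))
      = LinearMap.baseChange E (ρ g) ((repBaseChange F E ρ).asModuleEquiv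
        (π ((repBaseChange F E ρ).asModuleEquiv.symm x))) := by
    intro g x
    rw [← repBaseChange_apply, asModuleEquiv_symm_map_rho, map_smul, asModuleEquiv_map_smul,
      asAlgebraHom_of, repBaseChange_apply]
  set p₀ : V →ₗ[F] V :=
    { toFun := fun v => rr lam ((repBaseChange F E ρ).asModuleEquiv
        (π ((repBaseChange F E ρ).asModuleEquiv.symm ((1 : E) ⊗ₜ[F] v))))
      map_add' := fun x y => by rw [tmul_add, map_add, map_add, map_add, map_add]
      map_smul' := fun c v => by
        rw [RingHom.id_apply, tmul_smul, ← algebraMap_smul E c ((1 : E) ⊗ₜ[F] v), hsmulN,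
          algebraMap_smul, map_smul] } with hp₀
  have hequiv : ∀ (g : H) (v : V), p₀ (ρ g v) = ρ g (p₀ v) := by
    intro g v
    simp only [hp₀, LinearMap.coe_mk, AddHom.coe_mk]
    rw [show (1 : E) ⊗ₜ[F] (ρ g v) = LinearMap.baseChange E (ρ g) ((1 : E) ⊗ₜ[F] v) from rfl,
      hρN, rr_baseChange]
  set pA := equivariantToModuleHom ρ p₀ hequiv with hpA
  have hrange : ∀ x, pA x ∈ U := by
    intro x
    exact rr_mem_of_mem_extend ρ (hπmem _) lam
  have hfix : ∀ u ∈ U, pA u = u := by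
    intro u hu
    have hz := mem_extend ρ (E := E) hu
    rw [hpA, equivariantToModuleHom_apply]
    simp only [hp₀, LinearMap.coe_mk, AddHom.coe_mk]
    rw [hπfix _ hz, LinearEquiv.apply_symm_apply, rr_tmul, hlam, one_smul]
    simp
  refine ⟨LinearMap.ker (pA.codRestrict U hrange), LinearMap.isCompl_of_proj ?_⟩
  intro x
  exact Subtype.ext (hfix x x.2)

end Statement16Aux

namespace Statement16Aux

variable {F E : Type*} [Field F] [Field E] [Algebra F E]
  {H : Type*} [Group H] {V : Type*} [AddCommGroup V] [Module F V]
  (ρ : Representation F H V)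

lemma eq_zero_of_rr (x : TensorProduct F E V) (hx : ∀ l : E →ₗ[F] F, rr l x = 0) :
    x = 0 := by
  classical
  set b := Module.Basis.ofVectorSpace F E with hb
  set Φ : TensorProduct F E V ≃ₗ[F] (Module.Basis.ofVectorSpaceIndex F E →₀ V) :=
    (TensorProduct.congr b.repr (LinearEquiv.refl F V)).trans
      (TensorProduct.finsuppScalarLeft F V _) with hΦ
  have key : ∀ i, (Finsupp.lapply i).comp (Φ : TensorProduct F E V →ₗ[F] _)
      = rr (b.coord i) := by
    intro i
    apply TensorProduct.ext'
    intro e v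
    simp [hΦ, TensorProduct.finsuppScalarLeft_apply_tmul_apply, Module.Basis.coord_apply]
  have hΦx : Φ x = 0 := by
    ext i
    have h2 := DFunLike.congr_fun (key i) x
    simp only [LinearMap.comp_apply, LinearEquiv.coe_coe, Finsupp.lapply_apply] at h2
    rw [h2, hx]
    simp
  simpa using Φ.injective (by simpa using hΦx)

lemma extend_inf_eq_bot {S T : Submodule (MonoidAlgebra F H) ρ.asModule}
    (hST : S ⊓ T = ⊥) : extend (E := E) ρ S ⊓ extend ρ T = ⊥ := by
  rw [eq_bot_iff]
  intro x hx
  obtain ⟨hxS, hxT⟩ := Submodule.mem_inf.mp hx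
  have h0 : ∀ l : E →ₗ[F] F, rr l ((repBaseChange F E ρ).asModuleEquiv x) = 0 := by
    intro l
    have hmem : ρ.asModuleEquiv.symm (rr l ((repBaseChange F E ρ).asModuleEquiv x)) ∈ S ⊓ T :=
      ⟨rr_mem_of_mem_extend ρ hxS l, rr_mem_of_mem_extend ρ hxT l⟩
    rw [hST, Submodule.mem_bot] at hmem
    have := congrArg ρ.asModuleEquiv hmem
    simpa using this
  have := eq_zero_of_rr _ h0
  have h1 := congrArg (repBaseChange F E ρ).asModuleEquiv.symm this
  simpa using h1

lemma extend_ne_bot {S : Submodule (MonoidAlgebra F H) ρ.asModule} (hS : S ≠ ⊥) :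
    extend ρ S ≠ (⊥ : Submodule (MonoidAlgebra E H) (repBaseChange F E ρ).asModule) := by
  obtain ⟨s, hs, hs0⟩ := (Submodule.ne_bot_iff S).mp hS
  obtain ⟨lam, hlam⟩ := exists_lam (F := F) (E := E)
  intro hbot
  have hmem := mem_extend ρ (E := E) hs
  rw [hbot, Submodule.mem_bot] at hmem
  have h1 := congrArg (repBaseChange F E ρ).asModuleEquiv hmem
  simp only [LinearEquiv.apply_symm_apply, map_zero] at h1
  have h2 := congrArg (rr lam) h1
  rw [rr_tmul, hlam, one_smul, map_zero] at h2
  exact hs0 (by simpa using congrArg ρ.asModuleEquiv.symm h2)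

noncomputable def moduleHomToLinear {k G W : Type*} [CommSemiring k] [Monoid G]
    [AddCommMonoid W] [Module k W] (τ : Representation k G W)
    (φ : τ.asModule →ₗ[MonoidAlgebra k G] τ.asModule) : W →ₗ[k] W where
  toFun w := τ.asModuleEquiv (φ (τ.asModuleEquiv.symm w))
  map_add' x y := by simp
  map_smul' c w := by
    simp only [RingHom.id_apply, asModuleEquiv_symm_map_smul, map_smul,
      asModuleEquiv_map_smul]
    rw [← (τ.asModuleEquiv.symm).map_smul c w, asModuleEquiv_symm_map_smul, map_smul,
      asModuleEquiv_map_smul, AlgHom.commutes, Module.algebraMap_end_apply]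

@[simp] lemma moduleHomToLinear_apply {k G W : Type*} [CommSemiring k] [Monoid G]
    [AddCommMonoid W] [Module k W] (τ : Representation k G W) (φ) (w : W) :
    moduleHomToLinear τ φ w = τ.asModuleEquiv (φ (τ.asModuleEquiv.symm w)) := rfl

lemma moduleHomToLinear_equivariant {k G W : Type*} [CommSemiring k] [Monoid G]
    [AddCommMonoid W] [Module k W] (τ : Representation k G W)
    (φ : τ.asModule →ₗ[MonoidAlgebra k G] τ.asModule) (g : G) (w : W) :
    moduleHomToLinear τ φ (τ g w) = τ g (moduleHomToLinear τ φ w) := by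
  simp only [moduleHomToLinear_apply, asModuleEquiv_symm_map_rho, map_smul]
  rw [asModuleEquiv_map_smul, asAlgebraHom_of]

/-- Base-change of an `F[H]`-linear endomorphism to an `E[H]`-linear endomorphism. -/
noncomputable def extendHom (φ : ρ.asModule →ₗ[MonoidAlgebra F H] ρ.asModule) :
    (repBaseChange F E ρ).asModule →ₗ[MonoidAlgebra E H] (repBaseChange F E ρ).asModule :=
  equivariantToModuleHom (repBaseChange F E ρ)
    (LinearMap.baseChange E (moduleHomToLinear ρ φ))
    (by
      intro g x
      rw [repBaseChange_apply]
      have hcomm : (moduleHomToLinear ρ φ) ∘ₗ (ρ g : V →ₗ[F] V)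
          = (ρ g : V →ₗ[F] V) ∘ₗ (moduleHomToLinear ρ φ) :=
        LinearMap.ext (moduleHomToLinear_equivariant ρ φ g)
      have := congrArg (fun f => LinearMap.baseChange E f) hcomm
      simp only [LinearMap.baseChange_comp] at this
      exact DFunLike.congr_fun this x)

lemma extendHom_apply_gen (φ : ρ.asModule →ₗ[MonoidAlgebra F H] ρ.asModule)
    (u : ρ.asModule) :
    extendHom ρ φ ((repBaseChange F E ρ).asModuleEquiv.symm
        ((1 : E) ⊗ₜ[F] ρ.asModuleEquiv u))
      = (repBaseChange F E ρ).asModuleEquiv.symm ((1 : E) ⊗ₜ[F] ρ.asModuleEquiv (φ u)) := by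
  rw [extendHom, equivariantToModuleHom_apply, LinearEquiv.apply_symm_apply,
    LinearMap.baseChange_tmul, moduleHomToLinear_apply]
  simp

lemma map_extendHom_le {S T : Submodule (MonoidAlgebra F H) ρ.asModule}
    (φ : ρ.asModule →ₗ[MonoidAlgebra F H] ρ.asModule) (hφ : ∀ x, φ x ∈ T) :
    (extend (E := E) ρ S).map (extendHom ρ φ) ≤ extend ρ T := by
  rw [extend, Submodule.map_span, Submodule.span_le]
  rintro y ⟨x, ⟨u, hu, hxu⟩, rfl⟩
  have hx : x = (repBaseChange F E ρ).asModuleEquiv.symm ((1 : E) ⊗ₜ[F] ρ.asModuleEquiv u) := by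
    apply (repBaseChange F E ρ).asModuleEquiv.injective
    simpa using hxu
  rw [hx, extendHom_apply_gen]
  exact mem_extend ρ (hφ u)

lemma extendHom_id_on {S : Submodule (MonoidAlgebra F H) ρ.asModule}
    (φ ψ : ρ.asModule →ₗ[MonoidAlgebra F H] ρ.asModule)
    (hid : ∀ s ∈ S, ψ (φ s) = s) {x} (hx : x ∈ extend (E := E) ρ S) :
    extendHom ρ ψ (extendHom ρ φ x) = x := by
  induction hx using Submodule.span_induction with
  | mem x hgen =>
    obtain ⟨u, hu, hxu⟩ := hgen
    have hx : x = (repBaseChange F E ρ).asModuleEquiv.symm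
        ((1 : E) ⊗ₜ[F] ρ.asModuleEquiv u) := by
      apply (repBaseChange F E ρ).asModuleEquiv.injective
      simpa using hxu
    rw [hx, extendHom_apply_gen, extendHom_apply_gen, hid u hu]
  | zero => simp
  | add x y hx hy ihx ihy => rw [map_add, map_add, ihx, ihy]
  | smul b x hx ih => rw [map_smul, map_smul, ih]

end Statement16Aux

open Statement16Aux in
/-- Let `F ⊆ E` be a field extension and `H` a finite group.  If the `E[H]`-module
`E ⊗_F V` obtained from a finite-dimensional `F[H]`-module `V` by extension of scalars is
multiplicity free, then `V` is multiplicity free as an `F[H]`-module. -/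
theorem statement_16 (F E : Type*) [Field F] [Field E] [Algebra F E]
    (H : Type*) [Group H] [Finite H]
    (V : Type*) [AddCommGroup V] [Module F V] [FiniteDimensional F V]
    (ρ : Representation F H V)
    (h : MultiplicityFree (MonoidAlgebra E H) (repBaseChange F E ρ).asModule) :
    MultiplicityFree (MonoidAlgebra F H) ρ.asModule := by
  obtain ⟨hssE, huniq⟩ := h
  have hssF := semisimple_of ρ hssE
  refine ⟨hssF, ?_⟩
  intro S T hS hT hiso
  obtain ⟨e⟩ := hiso
  by_contra hne
  have hSatom : IsAtom S := isSimpleModule_iff_isAtom.mp hS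
  have hTatom : IsAtom T := isSimpleModule_iff_isAtom.mp hT
  have hST : S ⊓ T = ⊥ := by
    rcases lt_or_eq_of_le (inf_le_left : S ⊓ T ≤ S) with hlt | heq
    · exact hSatom.2 _ hlt
    · have hle : S ≤ T := by rw [← heq]; exact inf_le_right
      rcases hle.lt_or_eq with hlt | heq2
      · exact absurd (hTatom.2 _ hlt) hSatom.1
      · exact absurd heq2 hne
  obtain ⟨Sc, hSc⟩ := hssF.exists_isCompl S
  obtain ⟨Tc, hTc⟩ := hssF.exists_isCompl T
  set q : ρ.asModule →ₗ[MonoidAlgebra F H] ρ.asModule :=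
    T.subtype ∘ₗ e.toLinearMap ∘ₗ Submodule.projectionOnto S Sc hSc with hq
  set q' : ρ.asModule →ₗ[MonoidAlgebra F H] ρ.asModule :=
    S.subtype ∘ₗ e.symm.toLinearMap ∘ₗ Submodule.projectionOnto T Tc hTc with hq'
  have hq_mem : ∀ x, q x ∈ T := fun x => Submodule.coe_mem _
  have hqq' : ∀ s ∈ S, q' (q s) = s := by
    intro s hs
    have h1 : q s = (e ⟨s, hs⟩ : ρ.asModule) := by
      rw [hq]
      simp only [LinearMap.comp_apply, LinearEquiv.coe_coe, Submodule.coe_subtype]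
      rw [Submodule.projectionOnto_apply_left hSc ⟨s, hs⟩]
    rw [h1, hq']
    simp only [LinearMap.comp_apply, LinearEquiv.coe_coe, Submodule.coe_subtype]
    rw [Submodule.projectionOnto_apply_left hTc (e ⟨s, hs⟩), LinearEquiv.symm_apply_apply]
  set QB := extendHom (E := E) ρ q with hQB
  set QB' := extendHom (E := E) ρ q' with hQB'
  have hmapST : (extend (E := E) ρ S).map QB ≤ extend ρ T := map_extendHom_le ρ q hq_mem
  have hid : ∀ x ∈ extend (E := E) ρ S, QB' (QB x) = x := fun x hx =>
    extendHom_id_on ρ q q' hqq' hx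
  have hSTE := extend_inf_eq_bot (E := E) ρ hST
  have hSEne := extend_ne_bot (E := E) ρ hSatom.1
  haveI := hssE
  rcases @IsSemisimpleModule.eq_bot_or_exists_simple_le (MonoidAlgebra E H) _
    (repBaseChange F E ρ).asModule _ _ (extend (E := E) ρ S)
    (@IsSemisimpleModule.submodule _ _ _ _ _ hssE _) with h0 | hex
  · exact hSEne h0
  obtain ⟨P, hPle, hP⟩ := hex
  have hPatom : IsAtom P :=
    (isSimpleModule_iff_isAtom (R := MonoidAlgebra E H) (M := (repBaseChange F E ρ).asModule)).mp hP
  set P' := P.map QB with hP'def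
  have hmem : ∀ x ∈ P, QB x ∈ P' := fun x hx => Submodule.mem_map_of_mem hx
  set fQ := QB.restrict hmem with hfQ
  have hinj : Function.Injective fQ := by
    intro a b hab
    have hcoe : QB (a : (repBaseChange F E ρ).asModule) = QB b := congrArg Subtype.val hab
    have : (a : (repBaseChange F E ρ).asModule) = b := by
      rw [← hid _ (hPle a.2), ← hid _ (hPle b.2), hcoe]
    exact Subtype.ext this
  have hsurj : Function.Surjective fQ := by
    rintro ⟨y, hy⟩
    obtain ⟨x, hx, rfl⟩ := hy
    exact ⟨⟨x, hx⟩, rfl⟩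
  have equiv := LinearEquiv.ofBijective fQ ⟨hinj, hsurj⟩
  have heq := huniq P P' hP (by
    refine @IsSimpleModule.mk _ ?_ _ ?_ ?_ ?_
    exact (Submodule.orderIsoMapComapOfBijective fQ ⟨hinj, hsurj⟩).isSimpleOrder_iff.mp
      hP.toIsSimpleOrder) ⟨equiv⟩
  have hle2 : P ≤ extend (E := E) ρ S ⊓ extend ρ T :=
    le_inf hPle (by rw [heq, hP'def]; exact (Submodule.map_mono hPle).trans hmapST)
  rw [hSTE] at hle2
  exact hPatom.1 (le_bot_iff.mp hle2)
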